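/- Let Δ be a finite set with |Δ| = m, let r ≥ 1, let h ∈ Sym({1,…,r}) with h ≠ 1, and let k_1, …, k_r ∈ Sym(Δ). Then the permutation g of Δ^r defined by g(u)_i = k_i(u_{h⁻¹(i)}) has at most m^{r−1} fixed points; equivalently, its support has size at least (m−1)·m^{r−1}. -/

import Mathlib

/-- The permutation of Δ^r in product-action form with base k = (k_1,…,k_r) ∈ Sym(Δ)^r and
top h ∈ Sym({1,…,r}): it sends u to the tuple whose i-th entry is k_i(u_{h⁻¹(i)}). -/
def paPerm {Δ : Type*} {r : ℕ} (k : Fin r → Equiv.Perm Δ) (h : Equiv.Perm (Fin r)) :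
    Equiv.Perm (Fin r → Δ) where
  toFun u i := k i (u (h⁻¹ i))
  invFun u i := (k (h i))⁻¹ (u (h i))
  left_inv u := by funext i; simp
  right_inv u := by funext i; simp

/-- Let Δ be a finite set with |Δ| = m, let r ≥ 1, let h ∈ Sym({1,…,r}) with
h ≠ 1, and let k_1, …, k_r ∈ Sym(Δ). Then the permutation g of Δ^r defined by
g(u)_i = k_i(u_{h⁻¹(i)}) has at most m^{r−1} fixed points; equivalently, its support has
size at least (m−1)·m^{r−1}. -/
theorem stmt_12 {Δ : Type*} [Fintype Δ] (r : ℕ) (hr : 1 ≤ r)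
    (h : Equiv.Perm (Fin r)) (hh : h ≠ 1) (k : Fin r → Equiv.Perm Δ) :
    Nat.card {u : Fin r → Δ // paPerm k h u = u} ≤ Fintype.card Δ ^ (r - 1) ∧
    (Fintype.card Δ - 1) * Fintype.card Δ ^ (r - 1)
      ≤ Nat.card {u : Fin r → Δ // paPerm k h u ≠ u} := by
  classical
  -- find j with h⁻¹ j ≠ j
  obtain ⟨j, hj⟩ : ∃ j, h j ≠ j := by
    by_contra hc
    push_neg at hc
    exact hh (Equiv.ext fun x => by simp [hc x])
  have hj' : h⁻¹ j ≠ j := fun e => hj (by conv_lhs => rw [← e]; rw [← Equiv.Perm.mul_apply, mul_inv_cancel, Equiv.Perm.one_apply])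
  -- injective map from fixed points
  have hinj : Function.Injective
      (fun (u : {u : Fin r → Δ // paPerm k h u = u}) (i : {i : Fin r // i ≠ j}) => u.1 i.1) := by
    rintro ⟨u, hu⟩ ⟨v, hv⟩ huv
    have key : ∀ i : Fin r, i ≠ j → u i = v i := fun i hi =>
      congrFun huv ⟨i, hi⟩
    have huj : u j = k j (u (h⁻¹ j)) := (congrFun hu j).symm
    have hvj : v j = k j (v (h⁻¹ j)) := (congrFun hv j).symm
    have : u = v := by
      funext i
      by_cases hi : i = j
      · subst hi
        rw [huj, hvj, key _ hj']
      · exact key i hi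
    exact Subtype.ext this
  have card1 : Nat.card {u : Fin r → Δ // paPerm k h u = u} ≤ Fintype.card Δ ^ (r - 1) := by
    have := Fintype.card_le_of_injective _ hinj
    have hcs : Fintype.card {i : Fin r // i ≠ j} = r - 1 := by
      simp [Fintype.card_subtype_compl]
    rw [Nat.card_eq_fintype_card]
    calc Fintype.card {u : Fin r → Δ // paPerm k h u = u}
        ≤ Fintype.card ({i : Fin r // i ≠ j} → Δ) := this
      _ = Fintype.card Δ ^ (r - 1) := by rw [Fintype.card_fun, hcs]
  refine ⟨card1, ?_⟩
  have hcompl : Nat.card {u : Fin r → Δ // paPerm k h u ≠ u}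
      = Fintype.card Δ ^ r - Nat.card {u : Fin r → Δ // paPerm k h u = u} := by
    rw [Nat.card_eq_fintype_card, Nat.card_eq_fintype_card]
    have := Fintype.card_subtype_compl (fun u : Fin r → Δ => paPerm k h u = u)
    simpa [Fintype.card_fun, Fintype.card_fin] using this
  rw [hcompl]
  have hpow : Fintype.card Δ ^ r = Fintype.card Δ * Fintype.card Δ ^ (r - 1) := by
    conv_rhs => rw [← pow_succ']
    rw [Nat.sub_add_cancel hr]
  calc (Fintype.card Δ - 1) * Fintype.card Δ ^ (r - 1)
      = Fintype.card Δ * Fintype.card Δ ^ (r - 1) - Fintype.card Δ ^ (r - 1) := by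
        rw [Nat.sub_mul, one_mul]
    _ = Fintype.card Δ ^ r - Fintype.card Δ ^ (r - 1) := by rw [hpow]
    _ ≤ Fintype.card Δ ^ r - Nat.card {u : Fin r → Δ // paPerm k h u = u} :=
        Nat.sub_le_sub_left card1 _
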